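/- Let γ > 0, W > 0, and μ ∈ (0,1). The map p ↦ W(R(p) − 1)/((1−p) + R(p)·p), where R(p) = exp((logit(μ) − logit(p))/γ), is strictly decreasing on the interval (0,1). -/

import Mathlib

open Real

noncomputable def logit (q : ℝ) : ℝ := Real.log (q / (1 - q))

lemma logit_hasDerivAt {p : ℝ} (hp : 0 < p) (hp1 : p < 1) :
    HasDerivAt logit (1 / (p * (1 - p))) p := by
  have h1 : (0:ℝ) < 1 - p := by linarith
  have hq : HasDerivAt (fun x : ℝ => x / (1 - x))
      ((1 * (1 - p) - p * (0 - 1)) / (1 - p) ^ 2) p := by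
    exact (hasDerivAt_id p).div ((hasDerivAt_const p 1).sub (hasDerivAt_id p)) h1.ne'
  have hpos : (0:ℝ) < p / (1 - p) := div_pos hp h1
  have := hq.log hpos.ne'
  convert this using 1
  · rfl
  field_simp
  ring

/-- The CRRA binary-asset demand, viewed as a function of the price `p`,
is strictly decreasing on `(0,1)`. -/
theorem crra_demand_strictAntiOn_price
    (γ W μ : ℝ) (hγ : 0 < γ) (hW : 0 < W) (hμ : μ ∈ Set.Ioo (0:ℝ) 1) :
    StrictAntiOn
      (fun p : ℝ =>
        W * (Real.exp ((logit μ - logit p) / γ) - 1) /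
          ((1 - p) + Real.exp ((logit μ - logit p) / γ) * p))
      (Set.Ioo (0:ℝ) 1) := by
  set f := (fun p : ℝ =>
        W * (Real.exp ((logit μ - logit p) / γ) - 1) /
          ((1 - p) + Real.exp ((logit μ - logit p) / γ) * p)) with hf
  have hderiv : ∀ p ∈ Set.Ioo (0:ℝ) 1,
      HasDerivAt f
        ((W * (Real.exp ((logit μ - logit p) / γ) * ((0 - 1 / (p * (1 - p))) / γ)) *
            ((1 - p) + Real.exp ((logit μ - logit p) / γ) * p) -
          W * (Real.exp ((logit μ - logit p) / γ) - 1) *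
            ((0 - 1) + (Real.exp ((logit μ - logit p) / γ) * ((0 - 1 / (p * (1 - p))) / γ) * p +
              Real.exp ((logit μ - logit p) / γ) * 1))) /
          ((1 - p) + Real.exp ((logit μ - logit p) / γ) * p) ^ 2) p := by
    intro p hp
    obtain ⟨hp0, hp1⟩ := hp
    have h1 : (0:ℝ) < 1 - p := by linarith
    have hu : HasDerivAt (fun x : ℝ => (logit μ - logit x) / γ)
        ((0 - 1 / (p * (1 - p))) / γ) p :=
      (((hasDerivAt_const p (logit μ)).sub (logit_hasDerivAt hp0 hp1))).div_const γ
    have hR : HasDerivAt (fun x : ℝ => Real.exp ((logit μ - logit x) / γ))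
        (Real.exp ((logit μ - logit p) / γ) * ((0 - 1 / (p * (1 - p))) / γ)) p := hu.exp
    have hN : HasDerivAt (fun x : ℝ => W * (Real.exp ((logit μ - logit x) / γ) - 1))
        (W * (Real.exp ((logit μ - logit p) / γ) * ((0 - 1 / (p * (1 - p))) / γ))) p :=
      (hR.sub_const 1).const_mul W
    have hD : HasDerivAt (fun x : ℝ => (1 - x) + Real.exp ((logit μ - logit x) / γ) * x)
        ((0 - 1) + (Real.exp ((logit μ - logit p) / γ) * ((0 - 1 / (p * (1 - p))) / γ) * p +
          Real.exp ((logit μ - logit p) / γ) * 1)) p :=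
      (((hasDerivAt_const p 1).sub (hasDerivAt_id p))).add (hR.mul (hasDerivAt_id p))
    have hDne : (1 - p) + Real.exp ((logit μ - logit p) / γ) * p ≠ 0 := by
      have : 0 < Real.exp ((logit μ - logit p) / γ) * p :=
        mul_pos (Real.exp_pos _) hp0
      positivity
    exact hN.div hD hDne
  have hneg : ∀ p ∈ Set.Ioo (0:ℝ) 1, deriv f p < 0 := by
    intro p hp
    obtain ⟨hp0, hp1⟩ := hp
    have h1 : (0:ℝ) < 1 - p := by linarith
    rw [(hderiv p ⟨hp0, hp1⟩).deriv]
    set R := Real.exp ((logit μ - logit p) / γ) with hR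
    have hRpos : 0 < R := Real.exp_pos _
    have hDpos : 0 < (1 - p) + R * p := by positivity
    set u' := (0 - 1 / (p * (1 - p))) / γ with hu'
    have hu'neg : u' < 0 := by
      rw [hu']
      apply div_neg_of_neg_of_pos _ hγ
      have : 0 < 1 / (p * (1 - p)) := by positivity
      linarith
    have hnum : W * (R * u') * ((1 - p) + R * p) -
        W * (R - 1) * ((0 - 1) + (R * u' * p + R * 1)) =
        W * (R * u' - (R - 1) ^ 2) := by ring
    rw [hnum]
    apply div_neg_of_neg_of_pos
    · have : R * u' < 0 := mul_neg_of_pos_of_neg hRpos hu'neg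
      nlinarith [sq_nonneg (R - 1)]
    · positivity
  exact strictAntiOn_of_deriv_neg (convex_Ioo 0 1)
    (fun p hp => ((hderiv p hp).differentiableAt.continuousAt).continuousWithinAt)
    (fun x hx => hneg x (by rwa [interior_Ioo] at hx))
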